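/- arXiv:2211.05173 — 2 statements merged into one kernel-verified Lean document; each statement's English description precedes it below -/
import Mathlib

section
/- Let μ be a closure operator on 2^U (U finite) and C a closed set. If α and β are two nonredundant covers of μ, then the top restriction α_{=C} = {(S,Sμ) ∈ α | Sμ = C} is empty if and only if β_{=C} is empty. -/
open Set

variable {U : Type*}

/-- A closure operator on the power set of `U`: inclusion, monotonicity, idempotence. -/
def IsClosure (μ : Set U → Set U) : Prop :=
  (∀ X, X ⊆ μ X) ∧ (∀ X Y : Set U, X ⊆ Y → μ X ⊆ μ Y) ∧ (∀ X, μ (μ X) = μ X)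

/-- `K` is a key of `μ`: no proper subset of `K` has the same closure. -/
def IsKey (μ : Set U → Set U) (K : Set U) : Prop :=
  ∀ S : Set U, S ⊂ K → μ S ≠ μ K

/-- One step of the Extension-by-Closure recurrence for a set of pairs `α`. -/
def ecStep (α : Set (Set U × Set U)) (X : Set U) : Set U :=
  X ∪ ⋃ p ∈ {q ∈ α | q.1 ⊆ X}, p.2

/-- The iterates `Xα_t` of the Extension-by-Closure recurrence. -/
def ecIter (α : Set (Set U × Set U)) (X : Set U) : ℕ → Set U
  | 0 => X
  | n + 1 => ecStep α (ecIter α X n)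

/-- `Xα⁺`: the eventual stable value of the increasing recurrence
(for finite `U` the union over all iterates is the stable limit). -/
def extC (α : Set (Set U × Set U)) : Set U → Set U :=
  fun X => ⋃ n, ecIter α X n

/-- The closure `μ` viewed as a set of pairs `(X, Xμ)`. -/
def graphOf (μ : Set U → Set U) : Set (Set U × Set U) :=
  {p | p.2 = μ p.1}

/-- `α` is a cover of `μ`: a subset of `μ` (as pairs) with `α⁺ = μ`. -/
def IsCover (μ : Set U → Set U) (α : Set (Set U × Set U)) : Prop :=
  α ⊆ graphOf μ ∧ extC α = μ

/-- A nonredundant cover of `μ`: a cover no proper subset of which has closure `μ`. -/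
def NonredundantCover (μ : Set U → Set U) (α : Set (Set U × Set U)) : Prop :=
  IsCover μ α ∧ ∀ β : Set (Set U × Set U), β ⊂ α → extC β ≠ μ


section Aux

variable {δ δ' : Set (Set U × Set U)} {X Y Z : Set U}

lemma mem_ecStep {x : U} :
    x ∈ ecStep δ X ↔ x ∈ X ∨ ∃ p ∈ δ, p.1 ⊆ X ∧ x ∈ p.2 := by
  simp [ecStep]
  tauto

lemma subset_ecStep : X ⊆ ecStep δ X := subset_union_left

lemma snd_subset_ecStep {p : Set U × Set U} (hp : p ∈ δ) (h : p.1 ⊆ X) :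
    p.2 ⊆ ecStep δ X := fun x hx => mem_ecStep.2 (Or.inr ⟨p, hp, h, hx⟩)

lemma ecStep_mono_right (h : X ⊆ Y) : ecStep δ X ⊆ ecStep δ Y := by
  intro x hx
  rcases mem_ecStep.1 hx with hx | ⟨p, hp, hsub, hx⟩
  · exact subset_ecStep (h hx)
  · exact mem_ecStep.2 (Or.inr ⟨p, hp, hsub.trans h, hx⟩)

lemma ecStep_mono_left (h : δ ⊆ δ') : ecStep δ X ⊆ ecStep δ' X := by
  intro x hx
  rcases mem_ecStep.1 hx with hx | ⟨p, hp, hsub, hx⟩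
  · exact subset_ecStep hx
  · exact mem_ecStep.2 (Or.inr ⟨p, h hp, hsub, hx⟩)

lemma ecIter_mono_right (h : X ⊆ Y) : ∀ n, ecIter δ X n ⊆ ecIter δ Y n
  | 0 => h
  | n + 1 => ecStep_mono_right (ecIter_mono_right h n)

lemma ecIter_mono_left (h : δ ⊆ δ') : ∀ n, ecIter δ X n ⊆ ecIter δ' X n
  | 0 => subset_rfl
  | n + 1 => (ecStep_mono_left h).trans (ecStep_mono_right (ecIter_mono_left h n))

lemma ecIter_mono_nat : Monotone (ecIter δ X) :=
  monotone_nat_of_le_succ (fun n => subset_ecStep)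

lemma subset_extC : X ⊆ extC δ X := subset_iUnion (ecIter δ X) 0

lemma ecIter_subset_extC (n : ℕ) : ecIter δ X n ⊆ extC δ X := subset_iUnion _ n

lemma extC_mono_right (h : X ⊆ Y) : extC δ X ⊆ extC δ Y :=
  iUnion_mono fun n => ecIter_mono_right h n

lemma extC_mono_left (h : δ ⊆ δ') : extC δ X ⊆ extC δ' X :=
  iUnion_mono fun n => ecIter_mono_left h n

lemma extC_of_fix (h : ecStep δ Z = Z) : extC δ Z = Z := by
  have : ∀ n, ecIter δ Z n = Z := by
    intro n; induction n with
    | zero => rfl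
    | succ n ih => show ecStep δ _ = Z; rw [ih, h]
  simp only [extC, this, iUnion_const]

lemma ecStep_extC [Finite U] : ecStep δ (extC δ X) = extC δ X := by
  have : ∃ m n : ℕ, m ≠ n ∧ ecIter δ X m = ecIter δ X n :=
    Finite.exists_ne_map_eq_of_infinite (ecIter δ X)
  obtain ⟨m, n, hmn, he⟩ := this
  wlog hlt : m < n generalizing m n
  · exact this n m hmn.symm he.symm ((hmn.lt_or_gt).resolve_left hlt)
  have hfix : ecStep δ (ecIter δ X m) = ecIter δ X m := by
    apply subset_antisymm _ subset_ecStep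
    have h1 : ecIter δ X (m + 1) ⊆ ecIter δ X n := ecIter_mono_nat hlt
    rw [← he] at h1
    exact h1
  have hall : ∀ k, ecIter δ X (m + k) = ecIter δ X m := by
    intro k; induction k with
    | zero => rfl
    | succ k ih =>
      rw [Nat.add_succ]
      show ecStep δ (ecIter δ X (m + k)) = _
      rw [ih, hfix]
  have hext : extC δ X = ecIter δ X m := by
    apply subset_antisymm
    · apply iUnion_subset; intro k
      rcases le_or_gt k m with h | h
      · exact ecIter_mono_nat h
      · have := hall (k - m)
        rw [Nat.add_sub_cancel' h.le] at this
        rw [this]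
    · exact ecIter_subset_extC m
  rw [hext, hfix]

lemma ecStep_diff_eq {p : Set U × Set U} (h : ¬ p.1 ⊆ Z) :
    ecStep (δ \ {p}) Z = ecStep δ Z := by
  apply subset_antisymm (ecStep_mono_left diff_subset)
  intro x hx
  rcases mem_ecStep.1 hx with hx | ⟨q, hq, hsub, hx⟩
  · exact subset_ecStep hx
  · refine mem_ecStep.2 (Or.inr ⟨q, ⟨hq, ?_⟩, hsub, hx⟩)
    intro hqp
    rw [mem_singleton_iff] at hqp
    exact h (hqp ▸ hsub)

lemma extC_diff_eq {p : Set U × Set U} (hp : p ∈ δ) (h : ¬ p.2 ⊆ extC δ X) :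
    extC (δ \ {p}) X = extC δ X := by
  have key : ∀ n, ecIter (δ \ {p}) X n = ecIter δ X n := by
    intro n; induction n with
    | zero => rfl
    | succ n ih =>
      show ecStep _ _ = ecStep _ _
      rw [ih]
      apply ecStep_diff_eq
      intro hsub
      exact h ((snd_subset_ecStep hp hsub).trans (ecIter_subset_extC (n + 1)))
  simp only [extC, key]

lemma main_dir [Finite U] (μ : Set U → Set U)
    (hmono : ∀ X Y : Set U, X ⊆ Y → μ X ⊆ μ Y) (hincl : ∀ X, X ⊆ μ X)
    (C : Set U) (hC : μ C = C) (α β : Set (Set U × Set U))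
    (hαg : α ⊆ graphOf μ) (hαe : extC α = μ)
    (hβg : β ⊆ graphOf μ) (hβe : extC β = μ)
    (hβnr : ∀ γ : Set (Set U × Set U), γ ⊂ β → extC γ ≠ μ)
    (hαC : {p ∈ α | p.2 = C} = ∅) : {p ∈ β | p.2 = C} = ∅ := by
  by_contra hne
  obtain ⟨q, hqβ, hq2⟩ : ∃ q ∈ β, q.2 = C := by
    rcases eq_empty_or_nonempty {p ∈ β | p.2 = C} with h | ⟨q, hq⟩
    · exact absurd h hne
    · exact ⟨q, hq.1, hq.2⟩
  set K := q.1 with hK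
  have hμK : μ K = C := by
    have := hβg hqβ
    simp only [graphOf, mem_setOf_eq] at this
    rw [← hq2, this]
  set β' := β \ {q} with hβ'
  have hβ'ss : β' ⊂ β := sdiff_singleton_ssubset.2 hqβ
  have hβ'ne : extC β' ≠ μ := hβnr β' hβ'ss
  obtain ⟨X, hX⟩ : ∃ X, extC β' X ≠ μ X := by
    by_contra h
    push_neg at h
    exact hβ'ne (funext h)
  set Y := extC β' X with hY
  have hYfix : ecStep β' Y = Y := ecStep_extC
  have hβX : extC β X = μ X := congrFun hβe X
  have hYsub : Y ⊆ μ X := by rw [← hβX]; exact extC_mono_left diff_subset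
  -- K ⊆ Y
  have hKY : K ⊆ Y := by
    by_contra hKY
    apply hX
    apply subset_antisymm hYsub
    have hfixβ : ecStep β Y = Y := by
      apply subset_antisymm _ subset_ecStep
      intro x hx
      rcases mem_ecStep.1 hx with hx | ⟨p, hp, hsub, hx⟩
      · exact hx
      · have hpq : p ≠ q := fun h => hKY (by show q.1 ⊆ Y; rw [← h]; exact hsub)
        rw [← hYfix]
        exact mem_ecStep.2 (Or.inr ⟨p, ⟨hp, hpq⟩, hsub, hx⟩)
    have : extC β Y = Y := extC_of_fix hfixβ
    calc μ X = extC β X := hβX.symm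
      _ ⊆ extC β Y := extC_mono_right subset_extC
      _ = Y := this
  -- ¬ C ⊆ Y
  have hCY : ¬ C ⊆ Y := by
    intro hCsub
    apply hX
    apply subset_antisymm hYsub
    have hfixβ : ecStep β Y = Y := by
      apply subset_antisymm _ subset_ecStep
      intro x hx
      rcases mem_ecStep.1 hx with hx | ⟨p, hp, hsub, hx⟩
      · exact hx
      · by_cases hpq : p = q
        · exact hCsub (by rw [← hq2, ← hpq]; exact hx)
        · rw [← hYfix]
          exact mem_ecStep.2 (Or.inr ⟨p, ⟨hp, hpq⟩, hsub, hx⟩)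
    calc μ X = extC β X := hβX.symm
      _ ⊆ extC β Y := extC_mono_right subset_extC
      _ = Y := extC_of_fix hfixβ
  set W := Y ∩ C with hW
  have hKW : K ⊆ W := subset_inter hKY (hμK ▸ hincl K)
  have hμW : μ W = C :=
    subset_antisymm (hC ▸ hmono _ _ inter_subset_right) (hμK ▸ hmono _ _ hKW)
  have hWfix : ecStep β' W = W := by
    apply subset_antisymm _ subset_ecStep
    intro x hx
    rcases mem_ecStep.1 hx with hx | ⟨p, hp, hsub, hx⟩
    · exact hx
    · constructor
      · rw [← hYfix]
        exact mem_ecStep.2 (Or.inr ⟨p, hp, hsub.trans inter_subset_left, hx⟩)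
      · have hp2 : p.2 = μ p.1 := hβg (mem_of_mem_diff hp)
        have hsubC : p.2 ⊆ C := by rw [hp2, ← hμW]; exact hmono _ _ hsub
        exact hsubC hx
  have hstepα : ecStep α W = W := by
    apply subset_antisymm _ subset_ecStep
    intro x hx
    rcases mem_ecStep.1 hx with hx | ⟨p, hp, hsub, hx⟩
    · exact hx
    · have hp2 : p.2 = μ p.1 := hαg hp
      have hp2C : p.2 ⊆ C := by rw [hp2, ← hμW]; exact hmono _ _ hsub
      have hp2ne : p.2 ≠ C := by
        intro h
        have hmem : p ∈ {p ∈ α | p.2 = C} := ⟨hp, h⟩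
        rw [hαC] at hmem
        exact hmem
      have hnCp2 : ¬ C ⊆ p.2 := fun h => hp2ne (subset_antisymm hp2C h)
      have hβp1 : extC β p.1 = p.2 := by rw [congrFun hβe p.1, ← hp2]
      have heq : extC β' p.1 = extC β p.1 :=
        extC_diff_eq hqβ (by rw [hβp1, hq2]; exact hnCp2)
      have hfin : p.2 ⊆ W := by
        rw [← hβp1, ← heq]
        exact (extC_mono_right hsub).trans (le_of_eq (extC_of_fix hWfix))
      exact hfin hx
  have h1 : extC α W = W := extC_of_fix hstepα
  have h2 : extC α W = μ W := congrFun hαe W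
  rw [h2, hμW] at h1
  apply hCY
  rw [h1]
  exact inter_subset_left


end Aux

theorem top_empty_iff [Finite U] (μ : Set U → Set U) (hμ : IsClosure μ)
    (C : Set U) (hC : μ C = C) (α β : Set (Set U × Set U))
    (hα : NonredundantCover μ α) (hβ : NonredundantCover μ β) :
    {p ∈ α | p.2 = C} = ∅ ↔ {p ∈ β | p.2 = C} = ∅ := by
  constructor
  · intro h
    exact main_dir μ hμ.2.1 hμ.1 C hC α β hα.1.1 hα.1.2 hβ.1.1 hβ.1.2 hβ.2 h
  · intro h
    exact main_dir μ hμ.2.1 hμ.1 C hC β α hβ.1.1 hβ.1.2 hα.1.1 hα.1.2 hα.2 h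
end

section
/- Let μ be a closure operator on 2^U (U finite), α ⊆ μ a cover of μ, C a closed set with α_{=C} ≠ ∅, and Y ⊆ U with Yμ = C. Then there exists Z with (Z, C) ∈ α and Y →̇ Z (Y directly determines Z), i.e., Z ⊆ Y(μ_{⊂C})⁺. -/
open Set

variable {U : Type*}

lemma ecIter_mono (α : Set (Set U × Set U)) (X : Set U) : Monotone (ecIter α X) := by
  apply monotone_nat_of_le_succ
  intro n
  exact subset_union_left

lemma snd_subset_extC [Finite U] (β : Set (Set U × Set U)) (X : Set U) {p : Set U × Set U}
    (hp : p ∈ β) (h1 : p.1 ⊆ extC β X) : p.2 ⊆ extC β X := by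
  obtain ⟨I, hIfin, hI⟩ := Set.finite_subset_iUnion (Set.toFinite p.1) h1
  obtain ⟨N, hN⟩ := hIfin.bddAbove
  have h1N : p.1 ⊆ ecIter β X N := by
    refine hI.trans ?_
    exact iUnion₂_subset fun i hi => ecIter_mono β X (hN hi)
  have : p.2 ⊆ ecIter β X (N + 1) := by
    intro x hx
    exact Or.inr (mem_iUnion₂.2 ⟨p, ⟨hp, h1N⟩, hx⟩)
  exact this.trans (subset_iUnion (ecIter β X) (N + 1))

theorem exists_directly_determined [Finite U] (μ : Set U → Set U) (hμ : IsClosure μ)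
    (α : Set (Set U × Set U)) (hα : IsCover μ α)
    (C : Set U) (hC : μ C = C) (htop : {p ∈ α | p.2 = C} ≠ ∅)
    (Y : Set U) (hY : μ Y = C) :
    ∃ Z : Set U, (Z, C) ∈ α ∧ Z ⊆ extC {p ∈ graphOf μ | p.2 ⊂ C} Y := by
  obtain ⟨hincl, hmono, hidem⟩ := hμ
  set β : Set (Set U × Set U) := {p ∈ graphOf μ | p.2 ⊂ C} with hβ
  set W : Set U := extC β Y with hW
  by_cases hZ : ∃ p ∈ α, p.2 = C ∧ p.1 ⊆ W
  · obtain ⟨p, hpα, hp2, hp1⟩ := hZ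
    refine ⟨p.1, ?_, hp1⟩
    have : p = (p.1, C) := by rw [← hp2]
    exact this ▸ hpα
  -- otherwise every ecIter α Y n ⊆ W, contradiction
  exfalso
  push_neg at hZ
  have hWC : W ⊆ C := by
    have : ∀ n, ecIter β Y n ⊆ C := by
      intro n
      induction n with
      | zero => exact hY ▸ hincl Y
      | succ n ih =>
        intro x hx
        rcases hx with hx | hx
        · exact ih hx
        · obtain ⟨p, hp, hxp⟩ := mem_iUnion₂.1 hx
          exact hp.1.2.1.subset hxp
    exact iUnion_subset this
  have key : ∀ n, ecIter α Y n ⊆ W := by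
    intro n
    induction n with
    | zero => exact subset_iUnion (ecIter β Y) 0
    | succ n ih =>
      intro x hx
      rcases hx with hx | hx
      · exact ih hx
      · obtain ⟨p, hp, hxp⟩ := mem_iUnion₂.1 hx
        obtain ⟨hpα, hp1⟩ := hp
        have hp1W : p.1 ⊆ W := hp1.trans ih
        have hgr : p.2 = μ p.1 := hα.1 hpα
        have hp2C : p.2 ⊆ C := by
          rw [hgr]
          calc μ p.1 ⊆ μ C := hmono _ _ (hp1W.trans hWC)
          _ = C := hC
        have hp2ne : p.2 ≠ C := fun h => hZ p hpα h hp1W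
        have hpβ : p ∈ β := ⟨hgr, ssubset_of_subset_of_ne hp2C hp2ne⟩
        exact snd_subset_extC β Y hpβ hp1W hxp
  have hCW : C ⊆ W := by
    have : extC α Y = C := by rw [hα.2, hY]
    rw [← this]
    exact iUnion_subset key
  obtain ⟨p, hpα, hp2⟩ := nonempty_iff_ne_empty.2 htop
  have hp1C : p.1 ⊆ C := hp2 ▸ (hα.1 hpα ▸ hincl p.1)
  exact hZ p hpα hp2 (hp1C.trans hCW)
end
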